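/- For every prime p ≥ 11, π(p+1) − π((p+1)/2) ≥ 2, where π is the prime counting function. -/

import Mathlib

section RealPart
open Real

theorem my_real_main_inequality {x : ℝ} (x_large : (2048 : ℝ) ≤ x) :
    x * (2 * x) ^ (√(2 * x) + 1) * 4 ^ (2 * x / 3) ≤ 4 ^ x := by
  let f : ℝ → ℝ := fun x => log x + (√(2 * x) + 1) * log (2 * x) - log 4 / 3 * x
  have hf' : ∀ x, 0 < x → 0 < x * (2 * x) ^ (√(2 * x) + 1) / 4 ^ (x / 3) := fun x h =>
    div_pos (mul_pos h (rpow_pos_of_pos (mul_pos two_pos h) _)) (rpow_pos_of_pos four_pos _)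
  have hf : ∀ x, 0 < x → f x = log (x * (2 * x) ^ (√(2 * x) + 1) / 4 ^ (x / 3)) := by
    intro x h5
    have h6 := mul_pos (zero_lt_two' ℝ) h5
    have h7 := rpow_pos_of_pos h6 (√(2 * x) + 1)
    rw [log_div (mul_pos h5 h7).ne' (rpow_pos_of_pos four_pos _).ne', log_mul h5.ne' h7.ne',
      log_rpow h6, log_rpow zero_lt_four, ← mul_div_right_comm, ← mul_div, mul_comm x]
  have h5 : 0 < x := lt_of_lt_of_le (by norm_num1) x_large
  rw [← div_le_one (rpow_pos_of_pos four_pos x), ← div_div_eq_mul_div, ← rpow_sub four_pos, ←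
    mul_div 2 x, mul_div_left_comm, ← mul_one_sub, (by norm_num1 : (1 : ℝ) - 2 / 3 = 1 / 3),
    mul_one_div, ← log_nonpos_iff (hf' x h5).le, ← hf x h5]
  have h : ConcaveOn ℝ (Set.Ioi 0.5) f := by
    apply ConcaveOn.sub
    · apply ConcaveOn.add
      · exact strictConcaveOn_log_Ioi.concaveOn.subset
          (Set.Ioi_subset_Ioi (by norm_num)) (convex_Ioi 0.5)
      · have h1 : ConcaveOn ℝ (Set.Ioi 0.5) fun x : ℝ => √(2 * x) * log (2 * x) := by
          convert ((strictConcaveOn_sqrt_mul_log_Ioi.concaveOn.comp_linearMap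
            ((2 : ℝ) • LinearMap.id))) using 1
          iterate 2 rfl
          ext x
          simp only [Set.mem_Ioi, Set.mem_preimage, LinearMap.smul_apply,
            LinearMap.id_coe, id_eq, smul_eq_mul]
          rw [← mul_lt_mul_iff_right₀ (two_pos)]
          norm_num1
          rfl
          rfl
        have h2 : ConcaveOn ℝ (Set.Ioi 0.5) fun x : ℝ => log (2 * x) := by
          refine ((strictConcaveOn_log_Ioi.concaveOn.comp_linearMap
            ((2 : ℝ) • LinearMap.id)).subset ?_ (convex_Ioi 0.5))
          intro x hx
          simp only [Set.mem_Ioi, Set.mem_preimage, LinearMap.smul_apply,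
            LinearMap.id_coe, id_eq, smul_eq_mul] at hx ⊢
          linarith [hx]
        have h3 := h1.add h2
        simp only [add_mul, one_mul]
        exact h3
    apply ConvexOn.smul
    · refine div_nonneg (log_nonneg (by norm_num1)) (by norm_num1)
    · exact convexOn_id (convex_Ioi (0.5 : ℝ))
  suffices ∃ x1 x2, 0.5 < x1 ∧ x1 < x2 ∧ x2 ≤ x ∧ 0 ≤ f x1 ∧ f x2 ≤ 0 by
    obtain ⟨x1, x2, h1, h2, h0, h3, h4⟩ := this
    exact (h.right_le_of_le_left'' h1 ((h1.trans h2).trans_le h0) h2 h0 (h4.trans h3)).trans h4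
  refine ⟨18, 2048, by norm_num1, by norm_num1, x_large, ?_, ?_⟩
  · have : √(2 * 18 : ℝ) = 6 := (sqrt_eq_iff_mul_self_eq_of_pos (by norm_num1)).mpr (by norm_num1)
    rw [hf _ (by norm_num1), log_nonneg_iff (by positivity), this, one_le_div (by norm_num1)]
    rw [(by norm_num1 : (6 : ℝ) + 1 = (7 : ℕ)), rpow_natCast]
    norm_num1
  · have : √(2 * 2048 : ℝ) = 64 :=
      (sqrt_eq_iff_mul_self_eq_of_pos (by norm_num1)).mpr (by norm_num1)
    rw [hf _ (by norm_num1), log_nonpos_iff (hf' _ (by norm_num1)).le, this,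
        div_le_one (by positivity)]
    have h64 : (64 : ℝ) + 1 = (65 : ℕ) := by norm_num1
    rw [h64, rpow_natCast]
    have hL : (2048 : ℝ) * (2 * 2048) ^ (65 : ℕ) = 2 ^ (791 : ℕ) := by
      rw [show (2048:ℝ) = 2^11 by norm_num, show (2*2^11:ℝ) = 2^12 by norm_num, ← pow_mul, ← pow_add]
    rw [hL]
    have h4 : (4 : ℝ) = 2 ^ (2 : ℝ) := by rw [rpow_two]; norm_num1
    rw [h4, ← rpow_natCast 2 791, ← rpow_mul (by norm_num1 : (0:ℝ) ≤ 2)]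
    apply rpow_le_rpow_of_exponent_le
    all_goals norm_num1

end RealPart

open Nat

theorem my_prod_small_le (n : ℕ) (n_large : 2 < n) :
    (∏ x ∈ Finset.range (2 * n / 3 + 1), x ^ (centralBinom n).factorization x)
      ≤ (2 * n) ^ Nat.sqrt (2 * n) * 4 ^ (2 * n / 3) := by
  have n_pos : 0 < n := by omega
  have n2_pos : 1 ≤ 2 * n := by omega
  let S := (Finset.range (2 * n / 3 + 1)).filter Nat.Prime
  let f := fun x => x ^ (centralBinom n).factorization x
  have hSf : ∏ x ∈ S, f x = ∏ x ∈ Finset.range (2 * n / 3 + 1), f x := by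
    refine Finset.prod_filter_of_ne fun p _ h => ?_
    contrapose! h; dsimp only [f]
    rw [factorization_eq_zero_of_not_prime n.centralBinom h, _root_.pow_zero]
  rw [← hSf, ← Finset.prod_filter_mul_prod_filter_not S (· ≤ Nat.sqrt (2 * n))]
  apply mul_le_mul'
  · refine (Finset.prod_le_prod' fun p _ => (?_ : f p ≤ 2 * n)).trans ?_
    · exact pow_factorization_choose_le (mul_pos two_pos n_pos)
    have : (Finset.Icc 1 (Nat.sqrt (2 * n))).card = Nat.sqrt (2 * n) := by
      rw [Nat.card_Icc, Nat.add_sub_cancel]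
    rw [Finset.prod_const]
    refine pow_right_mono₀ n2_pos ((Finset.card_le_card fun x hx => ?_).trans this.le)
    obtain ⟨h1, h2⟩ := Finset.mem_filter.1 hx
    exact Finset.mem_Icc.mpr ⟨(Finset.mem_filter.1 h1).2.one_lt.le, h2⟩
  · refine le_trans ?_ (primorial_le_4_pow (2 * n / 3))
    refine (Finset.prod_le_prod' fun p hp => (?_ : f p ≤ p)).trans ?_
    · obtain ⟨h1, h2⟩ := Finset.mem_filter.1 hp
      refine (pow_right_mono₀ (Finset.mem_filter.1 h1).2.one_lt.le ?_).trans (pow_one p).le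
      exact Nat.factorization_choose_le_one (Nat.sqrt_lt'.mp <| not_le.1 h2)
    refine Finset.prod_le_prod_of_subset_of_one_le' (Finset.filter_subset _ _) ?_
    exact fun p hp _ => (Finset.mem_filter.1 hp).2.one_lt.le

theorem my_centralBinom_le (n : ℕ) (n_large : 2 < n) (p0 : ℕ)
    (only_prime : ∀ p : ℕ, p.Prime → n < p → p ≤ 2 * n → p = p0) :
    Nat.centralBinom n ≤ (2 * n) ^ (Nat.sqrt (2 * n) + 1) * 4 ^ (2 * n / 3) := by
  have n_pos : 0 < n := by omega
  set ν := (centralBinom n).factorization with hν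
  have hmod : 2 * n = 3 * (2 * n / 3) + 2 * n % 3 := (Nat.div_add_mod _ _).symm
  have hm3 : 2 * n % 3 < 3 := Nat.mod_lt _ (by norm_num)
  have ht2 : 2 ≤ 2 * n / 3 := by omega
  have key : centralBinom n =
      (∏ x ∈ Finset.Ico 0 (2 * n / 3 + 1), x ^ ν x) *
        ∏ x ∈ Finset.Ico (2 * n / 3 + 1) (2 * n + 1), x ^ ν x := by
    rw [Finset.prod_Ico_consecutive _ (by omega) (by omega)]
    rw [← Finset.range_eq_Ico]
    exact (prod_pow_factorization_centralBinom n).symm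
  have hone : ∀ x ∈ Finset.Ico (2 * n / 3 + 1) (2 * n + 1), x ≠ p0 → x ^ ν x = 1 := by
    intro x hx hne
    obtain ⟨hx1, hx2⟩ := Finset.mem_Ico.mp hx
    by_cases hxp : x.Prime
    · by_cases hxn : x ≤ n
      · rw [hν, factorization_centralBinom_of_two_mul_self_lt_three_mul n_large hxn (by omega),
          _root_.pow_zero]
      · exact absurd (only_prime x hxp (by omega) (by omega)) hne
    · rw [hν, factorization_eq_zero_of_not_prime _ hxp, _root_.pow_zero]
  have htail : (∏ x ∈ Finset.Ico (2 * n / 3 + 1) (2 * n + 1), x ^ ν x) ≤ 2 * n := by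
    have hsub : Finset.Ico (2 * n / 3 + 1) (2 * n + 1) ∩ {p0} ⊆
        Finset.Ico (2 * n / 3 + 1) (2 * n + 1) := Finset.inter_subset_left
    have heq : (∏ x ∈ Finset.Ico (2 * n / 3 + 1) (2 * n + 1) ∩ {p0}, x ^ ν x) =
        ∏ x ∈ Finset.Ico (2 * n / 3 + 1) (2 * n + 1), x ^ ν x := by
      refine Finset.prod_subset hsub fun x hx hnx => ?_
      refine hone x hx fun h => hnx ?_
      exact Finset.mem_inter.mpr ⟨hx, by simp [h]⟩
    rw [← heq]
    have hsub2 : Finset.Ico (2 * n / 3 + 1) (2 * n + 1) ∩ {p0} ⊆ ({p0} : Finset ℕ) :=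
      Finset.inter_subset_right
    rcases Finset.subset_singleton_iff.mp hsub2 with h | h
    · rw [h, Finset.prod_empty]; omega
    · rw [h, Finset.prod_singleton]
      have hp0mem : p0 ∈ Finset.Ico (2 * n / 3 + 1) (2 * n + 1) := by
        have : p0 ∈ Finset.Ico (2 * n / 3 + 1) (2 * n + 1) ∩ {p0} := by
          rw [h]; exact Finset.mem_singleton_self _
        exact Finset.mem_of_mem_inter_left this
      obtain ⟨hp1, hp2⟩ := Finset.mem_Ico.mp hp0mem
      have hsq : 2 * n < p0 ^ 2 := by
        have : p0 ^ 2 = p0 * p0 := sq p0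
        nlinarith [ht2, hmod, hm3, hp1]
      have hle1 : ν p0 ≤ 1 := Nat.factorization_choose_le_one hsq
      calc p0 ^ ν p0 ≤ p0 ^ 1 := Nat.pow_le_pow_right (by omega) hle1
        _ ≤ 2 * n := by rw [pow_one]; omega
  calc centralBinom n
      = (∏ x ∈ Finset.Ico 0 (2 * n / 3 + 1), x ^ ν x) *
        ∏ x ∈ Finset.Ico (2 * n / 3 + 1) (2 * n + 1), x ^ ν x := key
    _ ≤ ((2 * n) ^ Nat.sqrt (2 * n) * 4 ^ (2 * n / 3)) * (2 * n) := by
        refine Nat.mul_le_mul ?_ htail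
        rw [← Finset.range_eq_Ico]
        exact my_prod_small_le n n_large
    _ = (2 * n) ^ (Nat.sqrt (2 * n) + 1) * 4 ^ (2 * n / 3) := by ring

theorem my_main_inequality {n : ℕ} (n_large : 2048 ≤ n) :
    n * (2 * n) ^ (Nat.sqrt (2 * n) + 1) * 4 ^ (2 * n / 3) ≤ 4 ^ n := by
  rw [← @Nat.cast_le ℝ]
  simp only [Nat.cast_add, Nat.cast_one, Nat.cast_mul, Nat.cast_pow, Nat.cast_ofNat, ← Real.rpow_natCast]
  refine _root_.trans ?_ (my_real_main_inequality (by exact_mod_cast n_large))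
  gcongr
  · have n2_pos : 0 < 2 * n := by positivity
    exact_mod_cast n2_pos
  · have := Real.nat_sqrt_le_real_sqrt (a := 2 * n)
    push_cast at this ⊢
    linarith
  · norm_num1
  · exact Nat.cast_div_le.trans (by norm_cast)

theorem two_primes_large {n : ℕ} (n_large : 2048 ≤ n) :
    ∃ q r : ℕ, q.Prime ∧ r.Prime ∧ q < r ∧ n < q ∧ r ≤ 2 * n := by
  by_contra hcon
  push_neg at hcon
  obtain ⟨p0, hp0, hnp0, hp02n⟩ := Nat.exists_prime_lt_and_le_two_mul n (by omega)
  have only_prime : ∀ p : ℕ, p.Prime → n < p → p ≤ 2 * n → p = p0 := by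
    intro p hp hnp hp2n
    by_contra hne
    rcases lt_or_gt_of_ne hne with h | h
    · exact absurd hp02n (by simpa using hcon p p0 hp hp0 h hnp)
    · exact absurd hp2n (by simpa using hcon p0 p hp0 hp h hnp0)
  have H1 : n * (2 * n) ^ (Nat.sqrt (2 * n) + 1) * 4 ^ (2 * n / 3) ≤ 4 ^ n :=
    my_main_inequality n_large
  have H2 : 4 ^ n < n * centralBinom n :=
    Nat.four_pow_lt_mul_centralBinom n (by omega)
  have H3 := my_centralBinom_le n (by omega) p0 only_prime
  rw [mul_assoc] at H1
  exact not_le.2 H2 ((Nat.mul_le_mul_left n H3).trans H1)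

theorem tp_step {m : ℕ} (c q r : ℕ) (hq : q.Prime) (hr : r.Prime) (hqr : q < r)
    (hcov : r ≤ 2 * c)
    (H : m < c → ∃ q r : ℕ, q.Prime ∧ r.Prime ∧ q < r ∧ m < q ∧ r ≤ 2 * m) :
    m < q → ∃ q r : ℕ, q.Prime ∧ r.Prime ∧ q < r ∧ m < q ∧ r ≤ 2 * m := by
  intro h
  by_cases h' : m < c
  · exact H h'
  · exact ⟨q, r, hq, hr, hqr, h, by omega⟩

theorem two_primes {m : ℕ} (hm : 6 ≤ m) :
    ∃ q r : ℕ, q.Prime ∧ r.Prime ∧ q < r ∧ m < q ∧ r ≤ 2 * m := by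
  rcases le_or_gt 2063 m with h | h
  · exact two_primes_large (by omega)
  · have base : m < 7 → ∃ q r : ℕ, q.Prime ∧ r.Prime ∧ q < r ∧ m < q ∧ r ≤ 2 * m :=
      fun h' => ⟨7, 11, by norm_num, by norm_num, by norm_num, by omega, by omega⟩
    have s1 := tp_step 7 11 13 (by norm_num) (by norm_num) (by norm_num) (by norm_num) base
    have s2 := tp_step 11 13 19 (by norm_num) (by norm_num) (by norm_num) (by norm_num) s1
    have s3 := tp_step 13 19 23 (by norm_num) (by norm_num) (by norm_num) (by norm_num) s2
    have s4 := tp_step 19 23 37 (by norm_num) (by norm_num) (by norm_num) (by norm_num) s3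
    have s5 := tp_step 23 37 43 (by norm_num) (by norm_num) (by norm_num) (by norm_num) s4
    have s6 := tp_step 37 43 73 (by norm_num) (by norm_num) (by norm_num) (by norm_num) s5
    have s7 := tp_step 43 73 83 (by norm_num) (by norm_num) (by norm_num) (by norm_num) s6
    have s8 := tp_step 73 83 139 (by norm_num) (by norm_num) (by norm_num) (by norm_num) s7
    have s9 := tp_step 83 139 163 (by norm_num) (by norm_num) (by norm_num) (by norm_num) s8
    have s10 := tp_step 139 163 271 (by norm_num) (by norm_num) (by norm_num) (by norm_num) s9
    have s11 := tp_step 163 271 317 (by norm_num) (by norm_num) (by norm_num) (by norm_num) s10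
    have s12 := tp_step 271 317 541 (by norm_num) (by norm_num) (by norm_num) (by norm_num) s11
    have s13 := tp_step 317 541 631 (by norm_num) (by norm_num) (by norm_num) (by norm_num) s12
    have s14 := tp_step 541 631 1039 (by norm_num) (by norm_num) (by norm_num) (by norm_num) s13
    have s15 := tp_step 631 1039 1259 (by norm_num) (by norm_num) (by norm_num) (by norm_num) s14
    have s16 := tp_step 1039 1259 2063 (by norm_num) (by norm_num) (by norm_num) (by norm_num) s15
    have s17 := tp_step 1259 2063 2503 (by norm_num) (by norm_num) (by norm_num) (by norm_num) s16
    exact s17 h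

/-- For every prime p ≥ 11, π(p+1) − π((p+1)/2) ≥ 2. -/
theorem stmt_19 (p : ℕ) (hp : p.Prime) (h11 : 11 ≤ p) :
    2 ≤ Nat.primeCounting (p + 1) - Nat.primeCounting ((p + 1) / 2) := by
  have hodd : p % 2 = 1 := Nat.Prime.eq_two_or_odd hp |>.resolve_left (by omega)
  set m := (p + 1) / 2 with hm
  have h2m : 2 * m = p + 1 := by omega
  obtain ⟨q, r, hq, hr, hqr, hmq, hr2m⟩ := two_primes (m := m) (by omega)
  rw [h2m] at hr2m
  have hrne : r ≠ p + 1 := by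
    intro h
    have : Even r := by rw [h]; exact ⟨(p+1)/2, by omega⟩
    have := (Nat.Prime.even_iff hr).mp this
    omega
  have hrp : r ≤ p := by omega
  have key : Nat.count Nat.Prime (m + 1) + 2 ≤ Nat.count Nat.Prime (p + 2) := by
    have c1 : Nat.count Nat.Prime (m + 1) ≤ Nat.count Nat.Prime q :=
      Nat.count_monotone _ (by omega)
    have c2 : Nat.count Nat.Prime (q + 1) = Nat.count Nat.Prime q + 1 := by
      rw [Nat.count_succ, if_pos hq]
    have c3 : Nat.count Nat.Prime (q + 1) ≤ Nat.count Nat.Prime r :=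
      Nat.count_monotone _ (by omega)
    have c4 : Nat.count Nat.Prime (r + 1) = Nat.count Nat.Prime r + 1 := by
      rw [Nat.count_succ, if_pos hr]
    have c5 : Nat.count Nat.Prime (r + 1) ≤ Nat.count Nat.Prime (p + 2) :=
      Nat.count_monotone _ (by omega)
    omega
  have hπ : Nat.primeCounting (p + 1) = Nat.count Nat.Prime (p + 2) := rfl
  have hπ2 : Nat.primeCounting m = Nat.count Nat.Prime (m + 1) := rfl
  omega
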